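/- arXiv:1504.04489 — 2 statements merged into one kernel-verified Lean document; each statement's English description precedes it below -/
import Mathlib

section
/- (Proposition 3) Under the Gaussian regression model with global regression coefficients and cluster-specific Gaussian spatial random effects, for any two indices i ≠ j the marginal correlation of the responses is Corr(y_i, y_j) = (x_iᵀ T x_j + Σ_{h=1}^{k} λ_h² (H_h)_{ij} P(c_i = c_j = h)) / (√(σ² + x_iᵀ T x_i + Σ_{h=1}^{k} λ_h² P(c_i = h)) · √(σ² + x_jᵀ T x_j + Σ_{h=1}^{k} λ_h² P(c_j = h))). -/
open MeasureTheory ProbabilityTheory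

section AuxForProp3
open Real Filter Asymptotics Topology
open scoped NNReal ENNReal

lemma aux_exp_tendsto : Tendsto (fun x : ℝ => rexp (-(2⁻¹) * x ^ 2)) atTop (𝓝 0) :=
  Real.tendsto_exp_atBot.comp
    ((tendsto_pow_atTop two_ne_zero).const_mul_atTop_of_neg (by norm_num))

lemma aux_even_comp (f : ℝ → ℝ) (hf : ∀ x, f (-x) = f x) (h : Tendsto f atTop (𝓝 (0:ℝ))) :
    Tendsto f atBot (𝓝 (0:ℝ)) := by
  have := h.comp tendsto_neg_atBot_atTop
  exact this.congr fun x => hf x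

lemma aux_deriv_exp (x : ℝ) : HasDerivAt (fun x : ℝ => rexp (-(2⁻¹) * x ^ 2))
    (-x * rexp (-(2⁻¹) * x ^ 2)) x := by
  have h1 : HasDerivAt (fun x : ℝ => -(2⁻¹) * x ^ 2) (-(2⁻¹) * (↑2 * x ^ (2-1))) x :=
    (hasDerivAt_pow 2 x).const_mul _
  have := h1.exp
  convert this using 1
  push_cast
  ring

lemma aux_deriv1 (x : ℝ) : HasDerivAt (fun x : ℝ => -rexp (-(2⁻¹) * x ^ 2))
    (x * rexp (-(2⁻¹) * x ^ 2)) x := by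
  have := (aux_deriv_exp x).fun_neg
  refine this.congr_deriv ?_
  ring

lemma aux_int1 : ∫ x : ℝ, x * rexp (-(2⁻¹) * x ^ 2) = 0 := by
  have hint : Integrable (fun x : ℝ => x * rexp (-(2⁻¹) * x ^ 2)) := by
    have := integrable_mul_exp_neg_mul_sq (b := 2⁻¹) (by norm_num)
    simpa using this
  have htop : Tendsto (fun x : ℝ => -rexp (-(2⁻¹) * x ^ 2)) atTop (𝓝 (0:ℝ)) := by
    simpa using aux_exp_tendsto.neg
  have hbot : Tendsto (fun x : ℝ => -rexp (-(2⁻¹) * x ^ 2)) atBot (𝓝 (0:ℝ)) :=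
    aux_even_comp _ (fun x => by ring_nf) htop
  simpa using integral_of_hasDerivAt_of_tendsto aux_deriv1 hint hbot htop

lemma aux_int_sq_integrable : Integrable (fun x : ℝ => x ^ 2 * rexp (-(2⁻¹) * x ^ 2)) := by
  have := integrable_rpow_mul_exp_neg_mul_sq (b := 2⁻¹) (by norm_num) (s := 2) (by norm_num)
  have h2 : ∀ x : ℝ, x ^ (2:ℝ) = x ^ (2:ℕ) := fun x => by
    rw [← Real.rpow_natCast x 2]; norm_num
  simpa [h2] using this

lemma aux_deriv2 (x : ℝ) : HasDerivAt (fun x : ℝ => -(x * rexp (-(2⁻¹) * x ^ 2)))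
    (x ^ 2 * rexp (-(2⁻¹) * x ^ 2) - rexp (-(2⁻¹) * x ^ 2)) x := by
  have h1 := ((hasDerivAt_id x).fun_mul (aux_deriv_exp x)).fun_neg
  refine h1.congr_deriv ?_
  simp only [id_eq]
  ring

lemma aux_tendsto_xexp_top :
    Tendsto (fun x : ℝ => -(x * rexp (-(2⁻¹) * x ^ 2))) atTop (𝓝 (0:ℝ)) := by
  have h := rpow_mul_exp_neg_mul_sq_isLittleO_exp_neg (b := 2⁻¹) (by norm_num) 1
  have h2 : Tendsto (fun x : ℝ => x ^ (1:ℝ) * rexp (-(2⁻¹) * x ^ 2)) atTop (𝓝 (0:ℝ)) :=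
    h.isBigO.trans_tendsto (Real.tendsto_exp_atBot.comp
      ((tendsto_id (α := ℝ)).const_mul_atTop_of_neg (by norm_num)))
  have h3 : Tendsto (fun x : ℝ => x * rexp (-(2⁻¹) * x ^ 2)) atTop (𝓝 (0:ℝ)) := by
    refine h2.congr' ?_
    filter_upwards [eventually_ge_atTop (0:ℝ)] with x hx
    rw [Real.rpow_one]
  simpa using h3.neg

lemma aux_int2 : ∫ x : ℝ, x ^ 2 * rexp (-(2⁻¹) * x ^ 2) = Real.sqrt (2 * π) := by
  have hint2 : Integrable (fun x : ℝ => rexp (-(2⁻¹) * x ^ 2)) :=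
    integrable_exp_neg_mul_sq (by norm_num)
  have hint : Integrable (fun x : ℝ =>
      x ^ 2 * rexp (-(2⁻¹) * x ^ 2) - rexp (-(2⁻¹) * x ^ 2)) :=
    aux_int_sq_integrable.sub hint2
  have hbot : Tendsto (fun x : ℝ => -(x * rexp (-(2⁻¹) * x ^ 2))) atBot (𝓝 (0:ℝ)) := by
    have := (aux_tendsto_xexp_top.comp tendsto_neg_atBot_atTop).neg
    simp only [Function.comp, neg_neg, neg_zero, neg_sq, neg_mul] at this
    exact this.congr fun x => by ring_nf
  have h0 := integral_of_hasDerivAt_of_tendsto aux_deriv2 hint hbot aux_tendsto_xexp_top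
  rw [integral_sub aux_int_sq_integrable hint2, integral_gaussian] at h0
  have h1 : ∫ x : ℝ, x ^ 2 * rexp (-(2⁻¹) * x ^ 2) = Real.sqrt (π / 2⁻¹) := by linarith
  rw [h1]
  norm_num
  rw [mul_comm]

lemma aux_pdf_std (x : ℝ) :
    gaussianPDFReal 0 1 x = (Real.sqrt (2 * π))⁻¹ * rexp (-(2⁻¹) * x ^ 2) := by
  simp only [gaussianPDFReal, NNReal.coe_one, mul_one, sub_zero]
  ring_nf

lemma aux_gauss_std_withDensity :
    gaussianReal 0 1 = MeasureTheory.volume.withDensity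
      (fun x => ((Real.toNNReal (gaussianPDFReal 0 1 x) : ℝ≥0) : ℝ≥0∞)) := by
  rw [gaussianReal_of_var_ne_zero _ one_ne_zero]
  rfl

lemma aux_std_integrable (g : ℝ → ℝ)
    (h : Integrable (fun x => gaussianPDFReal 0 1 x * g x) MeasureTheory.volume) :
    Integrable g (gaussianReal 0 1) := by
  rw [aux_gauss_std_withDensity,
    integrable_withDensity_iff_integrable_smul (measurable_gaussianPDFReal 0 1).real_toNNReal]
  refine h.congr (Filter.Eventually.of_forall fun x => ?_)
  simp [NNReal.smul_def, Real.coe_toNNReal _ (gaussianPDFReal_nonneg 0 1 x)]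

lemma aux_std_integral (g : ℝ → ℝ) :
    ∫ x, g x ∂(gaussianReal 0 1) = ∫ x, gaussianPDFReal 0 1 x * g x := by
  rw [aux_gauss_std_withDensity,
    integral_withDensity_eq_integral_smul (measurable_gaussianPDFReal 0 1).real_toNNReal]
  refine integral_congr_ae (Filter.Eventually.of_forall fun x => ?_)
  simp [NNReal.smul_def, Real.coe_toNNReal _ (gaussianPDFReal_nonneg 0 1 x)]

lemma aux_sqrt_two_pi_pos : 0 < Real.sqrt (2 * π) :=
  Real.sqrt_pos.mpr (by positivity)

lemma std_integrable_id : Integrable (fun x : ℝ => x) (gaussianReal 0 1) := by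
  refine aux_std_integrable _ ?_
  have hint : Integrable (fun x : ℝ => x * rexp (-(2⁻¹) * x ^ 2)) := by
    have := integrable_mul_exp_neg_mul_sq (b := 2⁻¹) (by norm_num)
    simpa using this
  refine (hint.const_mul ((Real.sqrt (2*π))⁻¹)).congr
    (Filter.Eventually.of_forall fun x => ?_)
  simp only [aux_pdf_std]; ring

lemma std_int_id : ∫ x, x ∂(gaussianReal 0 1) = 0 := by
  rw [aux_std_integral]
  simp_rw [aux_pdf_std, mul_assoc]
  rw [integral_const_mul]
  simp_rw [show ∀ x : ℝ, rexp (-(2⁻¹) * x ^ 2) * x = x * rexp (-(2⁻¹) * x ^ 2) from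
    fun x => mul_comm _ _]
  rw [aux_int1, mul_zero]

lemma std_integrable_sq : Integrable (fun x : ℝ => x ^ 2) (gaussianReal 0 1) := by
  refine aux_std_integrable _ ?_
  refine (aux_int_sq_integrable.const_mul ((Real.sqrt (2*π))⁻¹)).congr
    (Filter.Eventually.of_forall fun x => ?_)
  simp only [aux_pdf_std]; ring

lemma std_int_sq : ∫ x, x ^ 2 ∂(gaussianReal 0 1) = 1 := by
  rw [aux_std_integral]
  simp_rw [aux_pdf_std, mul_assoc]
  rw [integral_const_mul]
  simp_rw [show ∀ x : ℝ, rexp (-(2⁻¹) * x ^ 2) * x ^ 2 = x ^ 2 * rexp (-(2⁻¹) * x ^ 2) from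
    fun x => mul_comm _ _]
  rw [aux_int2, inv_mul_cancel₀ (ne_of_gt aux_sqrt_two_pi_pos)]

lemma aux_gauss_eq_map (μ : ℝ) (v : ℝ≥0) :
    gaussianReal μ v
      = Measure.map (fun x => Real.sqrt v * x + μ) (gaussianReal 0 1) := by
  have h1 : Measure.map (fun x : ℝ => Real.sqrt v * x) (gaussianReal 0 1)
      = gaussianReal 0 v := by
    rw [show (fun x : ℝ => Real.sqrt v * x) = (Real.sqrt (v : ℝ) * ·) from rfl,
      gaussianReal_map_const_mul]
    congr 1
    · ring
    · ext
      simp [Real.sq_sqrt v.2]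
  have h2 : Measure.map (· + μ) (gaussianReal 0 v) = gaussianReal μ v := by
    rw [gaussianReal_map_add_const]
    norm_num
  rw [← h2, ← h1, Measure.map_map (measurable_add_const μ)
    ((measurable_const_mul _) )]
  rfl

lemma gauss_integrable_id (μ : ℝ) (v : ℝ≥0) :
    Integrable (fun x : ℝ => x) (gaussianReal μ v) := by
  rw [aux_gauss_eq_map μ v,
    integrable_map_measure measurable_id'.aestronglyMeasurable
      ((measurable_const_mul _).add_const μ).aemeasurable]
  exact (std_integrable_id.const_mul _).add (integrable_const _)

lemma gauss_integral_id (μ : ℝ) (v : ℝ≥0) :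
    ∫ x, x ∂(gaussianReal μ v) = μ := by
  rw [aux_gauss_eq_map μ v,
    integral_map ((measurable_const_mul _).add_const μ).aemeasurable
      measurable_id'.aestronglyMeasurable]
  rw [integral_add (std_integrable_id.const_mul _) (integrable_const _),
    integral_const_mul, std_int_id, integral_const]
  simp

lemma gauss_integrable_sq (μ : ℝ) (v : ℝ≥0) :
    Integrable (fun x : ℝ => x ^ 2) (gaussianReal μ v) := by
  rw [aux_gauss_eq_map μ v,
    integrable_map_measure (by fun_prop)
      ((measurable_const_mul _).add_const μ).aemeasurable]
  have : (fun x : ℝ => x ^ 2) ∘ (fun x => Real.sqrt v * x + μ)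
      = fun x => (v : ℝ) * x ^ 2 + (2 * Real.sqrt v * μ) * x + μ ^ 2 := by
    funext x
    simp only [Function.comp_apply]
    rw [add_sq, mul_pow, Real.sq_sqrt v.coe_nonneg]
    ring
  rw [this]
  exact ((std_integrable_sq.const_mul _).add (std_integrable_id.const_mul _)).add
    (integrable_const _)

lemma gauss_integral_sq (μ : ℝ) (v : ℝ≥0) :
    ∫ x, x ^ 2 ∂(gaussianReal μ v) = μ ^ 2 + v := by
  rw [aux_gauss_eq_map μ v,
    integral_map ((measurable_const_mul _).add_const μ).aemeasurable (by fun_prop)]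
  have h : (fun x : ℝ => (Real.sqrt v * x + μ) ^ 2)
      = fun x => ((v : ℝ) * x ^ 2 + (2 * Real.sqrt v * μ) * x) + μ ^ 2 := by
    funext x
    rw [add_sq, mul_pow, Real.sq_sqrt v.coe_nonneg]
    ring
  have hA : Integrable (fun x : ℝ => (v : ℝ) * x ^ 2 + (2 * Real.sqrt v * μ) * x)
      (gaussianReal 0 1) := (std_integrable_sq.const_mul _).add (std_integrable_id.const_mul _)
  rw [h, integral_add hA (integrable_const _),
    integral_add (std_integrable_sq.const_mul _) (std_integrable_id.const_mul _),
    integral_const_mul, integral_const_mul, std_int_sq, std_int_id, integral_const]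
  simp [add_comm]

section Transfer
variable {Ω : Type*} [MeasurableSpace Ω] {P : Measure Ω} {X : Ω → ℝ} {m : ℝ} {v : ℝ≥0}

lemma aux_map_gauss_integrable (hX : Measurable X)
    (h : Measure.map X P = gaussianReal m v) : Integrable X P := by
  have := (integrable_map_measure measurable_id'.aestronglyMeasurable
    hX.aemeasurable).mp (by rw [h]; exact gauss_integrable_id m v)
  exact this

lemma aux_map_gauss_integral (hX : Measurable X)
    (h : Measure.map X P = gaussianReal m v) : ∫ ω, X ω ∂P = m := by
  have h2 := integral_map hX.aemeasurable (measurable_id'.aestronglyMeasurable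
    (μ := Measure.map X P))
  rw [h, gauss_integral_id] at h2
  exact h2.symm

lemma aux_map_gauss_sq_integrable (hX : Measurable X)
    (h : Measure.map X P = gaussianReal m v) : Integrable (fun ω => X ω ^ 2) P := by
  have := (integrable_map_measure (f := X) (g := fun x => x ^ 2)
    (by fun_prop) hX.aemeasurable).mp (by rw [h]; exact gauss_integrable_sq m v)
  exact this

lemma aux_map_gauss_sq_integral (hX : Measurable X)
    (h : Measure.map X P = gaussianReal m v) : ∫ ω, X ω ^ 2 ∂P = m ^ 2 + v := by
  have h2 := integral_map (μ := P) (φ := X) (f := fun x => x ^ 2) hX.aemeasurable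
    (Measurable.aestronglyMeasurable (by fun_prop))
  rw [h, gauss_integral_sq] at h2
  exact h2.symm

lemma aux_L2_mul_integrable (f g : Ω → ℝ) (hf : MemLp f 2 P) (hg : MemLp g 2 P) :
    Integrable (fun ω => f ω * g ω) P := by
  have hb : Integrable (fun ω => (f ω ^ 2 + g ω ^ 2) / 2) P :=
    (hf.integrable_sq.add hg.integrable_sq).div_const 2
  refine hb.mono' (hf.aestronglyMeasurable.mul hg.aestronglyMeasurable)
    (Filter.Eventually.of_forall fun ω => ?_)
  rw [Real.norm_eq_abs, abs_mul]
  have h2 : 2 * |f ω| * |g ω| ≤ |f ω| ^ 2 + |g ω| ^ 2 := two_mul_le_add_sq _ _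
  rw [sq_abs, sq_abs] at h2
  linarith [abs_nonneg (f ω), abs_nonneg (g ω)]

end Transfer

lemma aux_int_ite {Ω : Type*} [MeasurableSpace Ω] (P : Measure Ω) [IsProbabilityMeasure P]
    (C : ℝ) (A : Ω → Prop) [DecidablePred A] (hA : MeasurableSet {ω | A ω}) :
    Integrable (fun ω => C * (if A ω then (1:ℝ) else 0)) P ∧
      ∫ ω, C * (if A ω then (1:ℝ) else 0) ∂P = C * (P {ω | A ω}).toReal := by
  have heq : (fun ω => C * (if A ω then (1:ℝ) else 0))
      = Set.indicator {ω | A ω} (fun _ => C) := by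
    funext ω
    by_cases hω : A ω <;> simp [Set.indicator_apply, Set.mem_setOf_eq, hω]
  rw [heq]
  constructor
  · exact (integrable_const C).indicator hA
  · rw [integral_indicator_const C hA, smul_eq_mul, mul_comm, measureReal_def]


end AuxForProp3

/-- Covariance of two real random variables. -/
noncomputable def cov {Ω : Type*} [MeasurableSpace Ω] (P : Measure Ω) (f g : Ω → ℝ) : ℝ :=
  (∫ ω, f ω * g ω ∂P) - (∫ ω, f ω ∂P) * (∫ ω, g ω ∂P)

/-- Variance of a real random variable. -/
noncomputable def var {Ω : Type*} [MeasurableSpace Ω] (P : Measure Ω) (f : Ω → ℝ) : ℝ :=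
  cov P f f

/-- Correlation of two real random variables. -/
noncomputable def corr {Ω : Type*} [MeasurableSpace Ω] (P : Measure Ω) (f g : Ω → ℝ) : ℝ :=
  cov P f g / (Real.sqrt (var P f) * Real.sqrt (var P g))

/-- (Proposition 3) Under the Gaussian regression model with global regression coefficients
and cluster-specific Gaussian spatial random effects, for any two indices `i ≠ j`,
`Corr(y i, y j) = (xᵢᵀ T xⱼ + ∑ₕ λₕ² (Hₕ)ᵢⱼ P(cᵢ = cⱼ = h))
  / (√(σ² + xᵢᵀ T xᵢ + ∑ₕ λₕ² P(cᵢ = h)) · √(σ² + xⱼᵀ T xⱼ + ∑ₕ λₕ² P(cⱼ = h)))`. -/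
theorem correlation_global_regression_local_spatial
    {Ω : Type*} [MeasurableSpace Ω] (P : Measure Ω) [IsProbabilityMeasure P]
    (n k p : ℕ) (hn : 2 ≤ n) (hk : 1 ≤ k) (hp : 1 ≤ p)
    -- random cluster labels
    (c : Fin n → Ω → Fin k) (hc : ∀ i, Measurable (c i))
    -- global Gaussian coefficient vector β ~ N(μv, T)
    (β : Ω → (Fin p → ℝ)) (hβ : Measurable β)
    -- Gaussian errors
    (ε : Fin n → Ω → ℝ) (hε : ∀ i, Measurable (ε i))
    -- cluster-specific spatial random effects
    (θ : Fin n → Ω → ℝ) (hθ : ∀ i, Measurable (θ i))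
    (μv : Fin p → ℝ) (T : Matrix (Fin p) (Fin p) ℝ) (hT : T.PosSemidef)
    (σ : ℝ) (hσ : 0 < σ)
    (lam : Fin k → ℝ) (hlam : ∀ h, 0 < lam h)
    (H : Fin k → Matrix (Fin n) (Fin n) ℝ) (hH : ∀ h, (H h).PosSemidef)
    (hHdiag : ∀ h i, H h i i = 1)
    -- β is Gaussian with mean μv and covariance T
    (hβgauss : ∀ a : Fin p → ℝ,
      Measure.map (fun ω => ∑ l, a l * β ω l) P
        = gaussianReal (∑ l, a l * μv l)
            (Real.toNNReal (∑ l, ∑ m, a l * T l m * a m)))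
    -- the ε's are i.i.d. N(0, σ²)
    (hεindep : iIndepFun ε P)
    (hεgauss : ∀ i, Measure.map (ε i) P = gaussianReal 0 (Real.toNNReal (σ ^ 2)))
    -- the θ's are square integrable with the prescribed conditional moments given the labels
    (hθL2 : ∀ i, MemLp (θ i) 2 P)
    (hθcond1 : ∀ i, P[θ i |
      MeasurableSpace.comap (fun ω (i' : Fin n) => c i' ω) inferInstance] =ᵐ[P] 0)
    (hθcond2 : ∀ i j, P[fun ω => θ i ω * θ j ω |
      MeasurableSpace.comap (fun ω (i' : Fin n) => c i' ω) inferInstance]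
      =ᵐ[P] fun ω => ∑ h, (lam h) ^ 2 * H h i j * (if c i ω = h ∧ c j ω = h then (1 : ℝ) else 0))
    -- β is independent of (labels, θ)
    (hβind : IndepFun β (fun ω => ((fun i => c i ω, fun i => θ i ω) :
      (Fin n → Fin k) × (Fin n → ℝ))) P)
    -- the ε family is independent of (labels, θ, β)
    (hεind : IndepFun (fun ω (i : Fin n) => ε i ω)
      (fun ω => ((fun i => c i ω, fun i => θ i ω, β ω) :
        (Fin n → Fin k) × (Fin n → ℝ) × (Fin p → ℝ))) P)
    -- fixed covariates and responses
    (x : Fin n → Fin p → ℝ)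
    (y : Fin n → Ω → ℝ)
    (hy : ∀ i ω, y i ω = (∑ l, x i l * β ω l) + θ i ω + ε i ω)
    (i j : Fin n) (hij : i ≠ j) :
    corr P (y i) (y j)
      = ((∑ l, ∑ m, x i l * T l m * x j m)
          + ∑ h, (lam h) ^ 2 * H h i j * (P {ω | c i ω = h ∧ c j ω = h}).toReal)
        / (Real.sqrt (σ ^ 2 + (∑ l, ∑ m, x i l * T l m * x i m)
              + ∑ h, (lam h) ^ 2 * (P {ω | c i ω = h}).toReal)
            * Real.sqrt (σ ^ 2 + (∑ l, ∑ m, x j l * T l m * x j m)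
              + ∑ h, (lam h) ^ 2 * (P {ω | c j ω = h}).toReal)) := by
    classical
  -- the label σ-algebra
  have hmΓ : (MeasurableSpace.comap (fun ω (i' : Fin n) => c i' ω) inferInstance)
      ≤ (inferInstance : MeasurableSpace Ω) :=
    Measurable.comap_le (measurable_pi_lambda _ fun i' => hc i')
  haveI : SigmaFinite (P.trim hmΓ) := by infer_instance
  -- the regression part
  set b : Fin n → Ω → ℝ := fun i' ω => ∑ l, x i' l * β ω l with hbdef
  have hbmeas : ∀ i', Measurable (b i') := fun i' =>
    Finset.measurable_sum _ fun l _ => ((measurable_pi_apply l).comp hβ).const_mul _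
  have hbgauss : ∀ i', Measure.map (b i') P
      = gaussianReal (∑ l, x i' l * μv l)
          (Real.toNNReal (∑ l, ∑ m', x i' l * T l m' * x i' m')) := fun i' => hβgauss (x i')
  have hqd : ∀ a : Fin p → ℝ, 0 ≤ ∑ l, ∑ m', a l * T l m' * a m' := by
    intro a
    have h1 : (∑ l, ∑ m', a l * T l m' * a m') = dotProduct (star a) (T.mulVec a) := by
      simp only [dotProduct, Matrix.mulVec, Pi.star_apply, star_trivial]
      exact Finset.sum_congr rfl fun l _ => by
        rw [Finset.mul_sum]
        exact Finset.sum_congr rfl fun m' _ => by ring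
    rw [h1]
    exact hT.dotProduct_mulVec_nonneg a
  have hsymT : ∀ l m', T m' l = T l m' := by
    intro l m'
    conv_rhs => rw [← hT.1]
    simp [Matrix.conjTranspose_apply]
  have hqs : ∀ i' j', (∑ l, ∑ m', x j' l * T l m' * x i' m')
      = ∑ l, ∑ m', x i' l * T l m' * x j' m' := by
    intro i' j'
    rw [Finset.sum_comm]
    exact Finset.sum_congr rfl fun l _ => Finset.sum_congr rfl fun m' _ => by
      rw [hsymT]; ring
  have hQexp : ∀ i' j', (∑ l, ∑ m', (x i' l + x j' l) * T l m' * (x i' m' + x j' m'))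
      = (∑ l, ∑ m', x i' l * T l m' * x i' m')
        + 2 * (∑ l, ∑ m', x i' l * T l m' * x j' m')
        + (∑ l, ∑ m', x j' l * T l m' * x j' m') := by
    intro i' j'
    have hexp : (∑ l, ∑ m', (x i' l + x j' l) * T l m' * (x i' m' + x j' m'))
        = (∑ l, ∑ m', x i' l * T l m' * x i' m')
          + (∑ l, ∑ m', x i' l * T l m' * x j' m')
          + ((∑ l, ∑ m', x j' l * T l m' * x i' m')
          + (∑ l, ∑ m', x j' l * T l m' * x j' m')) := by
      rw [← Finset.sum_add_distrib, ← Finset.sum_add_distrib, ← Finset.sum_add_distrib]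
      refine Finset.sum_congr rfl fun l _ => ?_
      rw [← Finset.sum_add_distrib, ← Finset.sum_add_distrib, ← Finset.sum_add_distrib]
      exact Finset.sum_congr rfl fun m' _ => by ring
    rw [hexp, hqs i' j']
    ring
  -- basic integrability and moments of b
  have hbint : ∀ i', Integrable (b i') P := fun i' =>
    aux_map_gauss_integrable (hbmeas i') (hbgauss i')
  have hbmean : ∀ i', ∫ ω, b i' ω ∂P = ∑ l, x i' l * μv l := fun i' =>
    aux_map_gauss_integral (hbmeas i') (hbgauss i')
  have hbsqint : ∀ i', Integrable (fun ω => b i' ω ^ 2) P := fun i' =>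
    aux_map_gauss_sq_integrable (hbmeas i') (hbgauss i')
  -- pair sums of b are Gaussian
  have hbbmap : ∀ i' j', Measure.map (fun ω => b i' ω + b j' ω) P
      = gaussianReal ((∑ l, x i' l * μv l) + (∑ l, x j' l * μv l))
          (Real.toNNReal ((∑ l, ∑ m', x i' l * T l m' * x i' m')
            + 2 * (∑ l, ∑ m', x i' l * T l m' * x j' m')
            + (∑ l, ∑ m', x j' l * T l m' * x j' m'))) := by
    intro i' j'
    have h := hβgauss (fun l => x i' l + x j' l)
    have hfun : (fun ω => ∑ l, (x i' l + x j' l) * β ω l) = fun ω => b i' ω + b j' ω := by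
      funext ω
      simp_rw [add_mul]
      rw [Finset.sum_add_distrib]
    rw [hfun] at h
    rw [h]
    congr 1
    · rw [← Finset.sum_add_distrib]
      exact Finset.sum_congr rfl fun l _ => by ring
    · rw [hQexp i' j']
  -- cross moments of b
  have hbbint : ∀ i' j', Integrable (fun ω => b i' ω * b j' ω) P := by
    intro i' j'
    have h1 := aux_map_gauss_sq_integrable
      (by exact (hbmeas i').add (hbmeas j')) (hbbmap i' j')
    have h2 : (fun ω => b i' ω * b j' ω)
        = fun ω => ((b i' ω + b j' ω) ^ 2 - b i' ω ^ 2 - b j' ω ^ 2) / 2 := by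
      funext ω; ring
    rw [h2]
    exact (((h1.sub (hbsqint i')).sub (hbsqint j')).div_const 2)
  have hbbmean : ∀ i' j', ∫ ω, b i' ω * b j' ω ∂P
      = (∑ l, x i' l * μv l) * (∑ l, x j' l * μv l)
        + (∑ l, ∑ m', x i' l * T l m' * x j' m') := by
    intro i' j'
    have hsq := aux_map_gauss_sq_integral
      (by exact (hbmeas i').add (hbmeas j')) (hbbmap i' j')
    have hQnn : 0 ≤ (∑ l, ∑ m', x i' l * T l m' * x i' m')
        + 2 * (∑ l, ∑ m', x i' l * T l m' * x j' m')
        + (∑ l, ∑ m', x j' l * T l m' * x j' m') := by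
      rw [← hQexp i' j']; exact hqd _
    rw [Real.coe_toNNReal _ hQnn] at hsq
    have hsqi := aux_map_gauss_sq_integral (hbmeas i') (hbgauss i')
    have hsqj := aux_map_gauss_sq_integral (hbmeas j') (hbgauss j')
    rw [Real.coe_toNNReal _ (hqd (x i'))] at hsqi
    rw [Real.coe_toNNReal _ (hqd (x j'))] at hsqj
    have h2 : (fun ω => b i' ω * b j' ω)
        = fun ω => ((b i' ω + b j' ω) ^ 2 - b i' ω ^ 2 - b j' ω ^ 2) / 2 := by
      funext ω; ring
    have h1 := aux_map_gauss_sq_integrable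
      (by exact (hbmeas i').add (hbmeas j')) (hbbmap i' j')
    have hsub1 : Integrable (fun ω => (b i' ω + b j' ω) ^ 2 - b i' ω ^ 2) P :=
      h1.sub (hbsqint i')
    rw [h2, integral_div, integral_sub hsub1 (hbsqint j'),
      integral_sub h1 (hbsqint i'), hsq, hsqi, hsqj]
    ring
  -- θ moments
  have hθint : ∀ i', Integrable (θ i') P := fun i' => (hθL2 i').integrable one_le_two
  have hθmean : ∀ i', ∫ ω, θ i' ω ∂P = 0 := by
    intro i'
    have h1 := integral_condExp (μ := P) hmΓ (f := θ i')
    have h2 := integral_congr_ae (hθcond1 i')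
    simp only [Pi.zero_apply, integral_zero] at h2
    rw [← h1, h2]
  have hθθint : ∀ i' j', Integrable (fun ω => θ i' ω * θ j' ω) P := fun i' j' =>
    aux_L2_mul_integrable _ _ (hθL2 i') (hθL2 j')
  have hSmeas : ∀ (i' j' : Fin n) (h : Fin k),
      MeasurableSet {ω | c i' ω = h ∧ c j' ω = h} := by
    intro i' j' h
    exact (hc i' (measurableSet_singleton h)).inter (hc j' (measurableSet_singleton h))
  have hθθmean : ∀ i' j', ∫ ω, θ i' ω * θ j' ω ∂P
      = ∑ h, lam h ^ 2 * H h i' j' * (P {ω | c i' ω = h ∧ c j' ω = h}).toReal := by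
    intro i' j'
    have h1 := integral_condExp (μ := P) hmΓ (f := fun ω => θ i' ω * θ j' ω)
    have h2 := integral_congr_ae (hθcond2 i' j')
    rw [← h1, h2]
    rw [integral_finset_sum _ (fun h _ =>
      (aux_int_ite P (lam h ^ 2 * H h i' j')
        (fun ω => c i' ω = h ∧ c j' ω = h) (hSmeas i' j' h)).1)]
    exact Finset.sum_congr rfl fun h _ =>
      (aux_int_ite P (lam h ^ 2 * H h i' j')
        (fun ω => c i' ω = h ∧ c j' ω = h) (hSmeas i' j' h)).2
  -- ε moments
  have hεint : ∀ i', Integrable (ε i') P := fun i' =>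
    aux_map_gauss_integrable (hε i') (hεgauss i')
  have hεmean : ∀ i', ∫ ω, ε i' ω ∂P = 0 := fun i' =>
    aux_map_gauss_integral (hε i') (hεgauss i')
  have hεsqint : ∀ i', Integrable (fun ω => ε i' ω * ε i' ω) P := by
    intro i'
    have := aux_map_gauss_sq_integrable (hε i') (hεgauss i')
    refine this.congr (Filter.Eventually.of_forall fun ω => ?_)
    exact pow_two _
  have hεsqmean : ∀ i', ∫ ω, ε i' ω * ε i' ω ∂P = σ ^ 2 := by
    intro i'
    have h1 := aux_map_gauss_sq_integral (hε i') (hεgauss i')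
    rw [Real.coe_toNNReal _ (sq_nonneg σ)] at h1
    have h2 : (fun ω => ε i' ω * ε i' ω) = fun ω => ε i' ω ^ 2 := by
      funext ω; rw [sq]
    rw [h2, h1]
    ring
  -- independence
  have hbθind : ∀ i' j', IndepFun (b i') (θ j') P := by
    intro i' j'
    have hφ : Measurable (fun v : Fin p → ℝ => ∑ l, x i' l * v l) :=
      Finset.measurable_sum _ fun l _ => (measurable_pi_apply l).const_mul _
    have hψ : Measurable (fun w : (Fin n → Fin k) × (Fin n → ℝ) => w.2 j') :=
      (measurable_pi_apply j').comp measurable_snd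
    exact hβind.comp hφ hψ
  have hεθind : ∀ i' j', IndepFun (ε i') (θ j') P := by
    intro i' j'
    have hφ : Measurable (fun v : Fin n → ℝ => v i') := measurable_pi_apply i'
    have hψ : Measurable
        (fun w : (Fin n → Fin k) × (Fin n → ℝ) × (Fin p → ℝ) => w.2.1 j') :=
      (measurable_pi_apply j').comp (measurable_fst.comp measurable_snd)
    exact hεind.comp hφ hψ
  have hεbind : ∀ i' j', IndepFun (ε i') (b j') P := by
    intro i' j'
    have hφ : Measurable (fun v : Fin n → ℝ => v i') := measurable_pi_apply i'
    have hψ : Measurable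
        (fun w : (Fin n → Fin k) × (Fin n → ℝ) × (Fin p → ℝ) => ∑ l, x j' l * w.2.2 l) :=
      Finset.measurable_sum _ fun l _ =>
        ((measurable_pi_apply l).comp (measurable_snd.comp measurable_snd)).const_mul _
    exact hεind.comp hφ hψ
  -- zero cross moments
  have hbθint : ∀ i' j', Integrable (fun ω => b i' ω * θ j' ω) P := fun i' j' =>
    (hbθind i' j').integrable_mul (hbint i') (hθint j')
  have hbθ0 : ∀ i' j', ∫ ω, b i' ω * θ j' ω ∂P = 0 := by
    intro i' j'
    have h0 : ∫ ω, b i' ω * θ j' ω ∂P = (∫ ω, b i' ω ∂P) * ∫ ω, θ j' ω ∂P :=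
      (hbθind i' j').integral_mul_eq_mul_integral (hbmeas i').aestronglyMeasurable
        (hθ j').aestronglyMeasurable
    rw [h0, hθmean, mul_zero]
  have hθbint : ∀ i' j', Integrable (fun ω => θ i' ω * b j' ω) P := by
    intro i' j'
    have h := hbθint j' i'
    refine h.congr (Filter.Eventually.of_forall fun ω => ?_)
    exact mul_comm _ _
  have hθb0 : ∀ i' j', ∫ ω, θ i' ω * b j' ω ∂P = 0 := by
    intro i' j'
    have h : (fun ω => θ i' ω * b j' ω) = fun ω => b j' ω * θ i' ω := by
      funext ω; rw [mul_comm]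
    rw [h, hbθ0 j' i']
  have hεθint : ∀ i' j', Integrable (fun ω => ε i' ω * θ j' ω) P := fun i' j' =>
    (hεθind i' j').integrable_mul (hεint i') (hθint j')
  have hεθ0 : ∀ i' j', ∫ ω, ε i' ω * θ j' ω ∂P = 0 := by
    intro i' j'
    have h0 : ∫ ω, ε i' ω * θ j' ω ∂P = (∫ ω, ε i' ω ∂P) * ∫ ω, θ j' ω ∂P :=
      (hεθind i' j').integral_mul_eq_mul_integral (hε i').aestronglyMeasurable
        (hθ j').aestronglyMeasurable
    rw [h0, hεmean, zero_mul]
  have hθεint : ∀ i' j', Integrable (fun ω => θ i' ω * ε j' ω) P := by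
    intro i' j'
    have h := hεθint j' i'
    refine h.congr (Filter.Eventually.of_forall fun ω => ?_)
    exact mul_comm _ _
  have hθε0 : ∀ i' j', ∫ ω, θ i' ω * ε j' ω ∂P = 0 := by
    intro i' j'
    have h : (fun ω => θ i' ω * ε j' ω) = fun ω => ε j' ω * θ i' ω := by
      funext ω; rw [mul_comm]
    rw [h, hεθ0 j' i']
  have hεbint : ∀ i' j', Integrable (fun ω => ε i' ω * b j' ω) P := fun i' j' =>
    (hεbind i' j').integrable_mul (hεint i') (hbint j')
  have hεb0 : ∀ i' j', ∫ ω, ε i' ω * b j' ω ∂P = 0 := by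
    intro i' j'
    have h0 : ∫ ω, ε i' ω * b j' ω ∂P = (∫ ω, ε i' ω ∂P) * ∫ ω, b j' ω ∂P :=
      (hεbind i' j').integral_mul_eq_mul_integral (hε i').aestronglyMeasurable
        (hbmeas j').aestronglyMeasurable
    rw [h0, hεmean, zero_mul]
  have hbεint : ∀ i' j', Integrable (fun ω => b i' ω * ε j' ω) P := by
    intro i' j'
    have h := hεbint j' i'
    refine h.congr (Filter.Eventually.of_forall fun ω => ?_)
    exact mul_comm _ _
  have hbε0 : ∀ i' j', ∫ ω, b i' ω * ε j' ω ∂P = 0 := by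
    intro i' j'
    have h : (fun ω => b i' ω * ε j' ω) = fun ω => ε j' ω * b i' ω := by
      funext ω; rw [mul_comm]
    rw [h, hεb0 j' i']
  -- mean of y
  have hEy : ∀ i', ∫ ω, y i' ω ∂P = ∑ l, x i' l * μv l := by
    intro i'
    have heq : (fun ω => y i' ω) = fun ω => b i' ω + θ i' ω + ε i' ω :=
      funext fun ω => hy i' ω
    have hbθadd : Integrable (fun ω => b i' ω + θ i' ω) P := (hbint i').add (hθint i')
    rw [heq, integral_add hbθadd (hεint i'),
      integral_add (hbint i') (hθint i'), hbmean, hθmean, hεmean]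
    ring
  -- second moments of y
  have key : ∀ i' j', Integrable (fun ω => ε i' ω * ε j' ω) P →
      ∫ ω, y i' ω * y j' ω ∂P
        = ((∑ l, x i' l * μv l) * (∑ l, x j' l * μv l)
            + (∑ l, ∑ m', x i' l * T l m' * x j' m'))
          + (∑ h, lam h ^ 2 * H h i' j' * (P {ω | c i' ω = h ∧ c j' ω = h}).toReal)
          + ∫ ω, ε i' ω * ε j' ω ∂P := by
    intro i' j' hee
    have hexp : (fun ω => y i' ω * y j' ω) = fun ω =>
        (b i' ω * b j' ω + (b i' ω * θ j' ω + θ i' ω * b j' ω)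
          + (b i' ω * ε j' ω + ε i' ω * b j' ω)
          + (θ i' ω * θ j' ω + (θ i' ω * ε j' ω + ε i' ω * θ j' ω)))
          + ε i' ω * ε j' ω := by
      funext ω; rw [hy, hy]; ring
    have I2 : Integrable (fun ω => b i' ω * θ j' ω + θ i' ω * b j' ω) P :=
      (hbθint i' j').add (hθbint i' j')
    have I3 : Integrable (fun ω => b i' ω * ε j' ω + ε i' ω * b j' ω) P :=
      (hbεint i' j').add (hεbint i' j')
    have I5 : Integrable (fun ω => θ i' ω * ε j' ω + ε i' ω * θ j' ω) P :=
      (hθεint i' j').add (hεθint i' j')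
    have I45 : Integrable (fun ω =>
        θ i' ω * θ j' ω + (θ i' ω * ε j' ω + ε i' ω * θ j' ω)) P :=
      (hθθint i' j').add I5
    have I12 : Integrable (fun ω =>
        b i' ω * b j' ω + (b i' ω * θ j' ω + θ i' ω * b j' ω)) P :=
      (hbbint i' j').add I2
    have I123 : Integrable (fun ω =>
        b i' ω * b j' ω + (b i' ω * θ j' ω + θ i' ω * b j' ω)
          + (b i' ω * ε j' ω + ε i' ω * b j' ω)) P := I12.add I3
    have I1to5 : Integrable (fun ω =>
        b i' ω * b j' ω + (b i' ω * θ j' ω + θ i' ω * b j' ω)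
          + (b i' ω * ε j' ω + ε i' ω * b j' ω)
          + (θ i' ω * θ j' ω + (θ i' ω * ε j' ω + ε i' ω * θ j' ω))) P := I123.add I45
    rw [hexp, integral_add I1to5 hee, integral_add I123 I45, integral_add I12 I3,
      integral_add (hbbint i' j') I2,
      integral_add (hbθint i' j') (hθbint i' j'),
      integral_add (hbεint i' j') (hεbint i' j'),
      integral_add (hθθint i' j') I5,
      integral_add (hθεint i' j') (hεθint i' j'),
      hbbmean, hbθ0, hθb0, hbε0, hεb0, hθθmean, hθε0, hεθ0]
    ring
  -- variance of y
  have hvar : ∀ i', var P (y i')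
      = σ ^ 2 + (∑ l, ∑ m', x i' l * T l m' * x i' m')
        + ∑ h, lam h ^ 2 * (P {ω | c i' ω = h}).toReal := by
    intro i'
    have hcollapse : (∑ h, lam h ^ 2 * H h i' i' * (P {ω | c i' ω = h ∧ c i' ω = h}).toReal)
        = ∑ h, lam h ^ 2 * (P {ω | c i' ω = h}).toReal := by
      refine Finset.sum_congr rfl fun h _ => ?_
      rw [hHdiag h i', mul_one,
        show {ω | c i' ω = h ∧ c i' ω = h} = {ω | c i' ω = h} from
          Set.ext fun ω => by simp]
    unfold var cov
    rw [key i' i' (hεsqint i'), hεsqmean i', hEy i', hcollapse]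
    ring
  -- covariance of y i and y j
  have hεεij : Integrable (fun ω => ε i ω * ε j ω) P :=
    (hεindep.indepFun hij).integrable_mul (hεint i) (hεint j)
  have hεε0 : ∫ ω, ε i ω * ε j ω ∂P = 0 := by
    have h0 : ∫ ω, ε i ω * ε j ω ∂P = (∫ ω, ε i ω ∂P) * ∫ ω, ε j ω ∂P :=
      (hεindep.indepFun hij).integral_mul_eq_mul_integral (hε i).aestronglyMeasurable
        (hε j).aestronglyMeasurable
    rw [h0, hεmean, zero_mul]
  have hcov : cov P (y i) (y j)
      = (∑ l, ∑ m', x i l * T l m' * x j m')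
        + ∑ h, lam h ^ 2 * H h i j * (P {ω | c i ω = h ∧ c j ω = h}).toReal := by
    unfold cov
    rw [key i j hεεij, hεε0, hEy i, hEy j]
    ring
  unfold corr
  rw [hcov, hvar i, hvar j]
end

section
/- (Proposition 3, intercept-only case) In the Gaussian model with a global random intercept and cluster-specific Gaussian spatial random effects and no covariates, for any two indices i ≠ j the marginal correlation of the responses is Corr(y_i, y_j) = (τ² + Σ_{h=1}^{k} λ_h² (H_h)_{ij} P(c_i = c_j = h)) / (√(σ² + τ² + Σ_{h=1}^{k} λ_h² P(c_i = h)) · √(σ² + τ² + Σ_{h=1}^{k} λ_h² P(c_j = h))). -/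
open MeasureTheory ProbabilityTheory Real Filter
open scoped NNReal ENNReal
section GaussAux

private lemma intGauss_odd {b : ℝ} (hb : 0 < b) :
    ∫ x : ℝ, x * rexp (-b * x ^ 2) = 0 := by
  have h := integral_neg_eq_self (fun x : ℝ => x * rexp (-b * x ^ 2)) (volume : Measure ℝ)
  simp only [neg_sq, neg_mul] at h
  rw [integral_neg] at h
  simp only [neg_mul]
  linarith

private lemma integrable_sq_mul_exp {b : ℝ} (hb : 0 < b) :
    Integrable (fun x : ℝ => x ^ 2 * rexp (-b * x ^ 2)) := by
  have h := integrable_rpow_mul_exp_neg_mul_sq hb (s := 2) (by norm_num)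
  have : (fun x : ℝ => x ^ (2:ℝ) * rexp (-b * x ^ 2))
      = fun x : ℝ => x ^ 2 * rexp (-b * x ^ 2) := by
    ext x; rw [show ((2:ℝ) = ((2:ℕ):ℝ)) by norm_num, Real.rpow_natCast]
  rwa [this] at h

private lemma tendsto_mul_exp_atTop {b : ℝ} (hb : 0 < b) :
    Tendsto (fun x : ℝ => x * rexp (-b * x ^ 2)) atTop (nhds 0) := by
  have h := rpow_mul_exp_neg_mul_sq_isLittleO_exp_neg hb 1
  have h2 : Tendsto (fun x : ℝ => rexp (-(1/2) * x)) atTop (nhds 0) := by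
    have : Tendsto (fun x : ℝ => -(1/2) * x) atTop atBot :=
      Filter.Tendsto.const_mul_atTop_of_neg (by norm_num) tendsto_id
    exact Real.tendsto_exp_atBot.comp this
  have := h.tendsto_zero_of_tendsto h2
  simpa [Real.rpow_one] using this

private lemma tendsto_mul_exp_atBot {b : ℝ} (hb : 0 < b) :
    Tendsto (fun x : ℝ => x * rexp (-b * x ^ 2)) atBot (nhds 0) := by
  have h := (tendsto_mul_exp_atTop hb).comp Filter.tendsto_neg_atBot_atTop
  have h2 : Tendsto (fun x : ℝ => -(x * rexp (-b * x ^ 2))) atBot (nhds 0) := by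
    refine h.congr fun x => ?_
    simp [Function.comp, neg_mul]
  have := h2.neg
  simpa using this

private lemma intGauss_sq {b : ℝ} (hb : 0 < b) :
    ∫ x : ℝ, x ^ 2 * rexp (-b * x ^ 2) = Real.sqrt (π / b) / (2 * b) := by
  set F : ℝ → ℝ := fun x => -(x * rexp (-b * x ^ 2)) / (2 * b) with hF
  have hderiv : ∀ x : ℝ, HasDerivAt F
      (x ^ 2 * rexp (-b * x ^ 2) - rexp (-b * x ^ 2) / (2 * b)) x := by
    intro x
    have h1 : HasDerivAt (fun x : ℝ => -b * x ^ 2) (-b * (2 * x)) x := by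
      simpa using ((hasDerivAt_pow 2 x).const_mul (-b))
    have h2 : HasDerivAt (fun x : ℝ => rexp (-b * x ^ 2))
        (rexp (-b * x ^ 2) * (-b * (2 * x))) x := h1.exp
    have h3 : HasDerivAt (fun x : ℝ => x * rexp (-b * x ^ 2))
        (1 * rexp (-b * x ^ 2) + x * (rexp (-b * x ^ 2) * (-b * (2 * x)))) x :=
      (hasDerivAt_id x).mul h2
    have h4 := (h3.neg).div_const (2 * b)
    refine h4.congr_deriv ?_
    have hb0 : b ≠ 0 := hb.ne'
    rw [div_eq_iff (by positivity), sub_mul, div_mul_cancel₀ _ (by positivity)]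
    ring
  have hint : Integrable
      (fun x : ℝ => x ^ 2 * rexp (-b * x ^ 2) - rexp (-b * x ^ 2) / (2 * b)) :=
    (integrable_sq_mul_exp hb).sub ((integrable_exp_neg_mul_sq hb).div_const _)
  have hIoi : ∫ x in Set.Ioi (0:ℝ),
      (x ^ 2 * rexp (-b * x ^ 2) - rexp (-b * x ^ 2) / (2 * b)) = 0 := by
    have := integral_Ioi_of_hasDerivAt_of_tendsto' (a := 0)
      (fun x _ => hderiv x) hint.integrableOn (m := 0) ?_
    · simpa [hF] using this
    · have := (tendsto_mul_exp_atTop hb).neg.div_const (2 * b)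
      simpa [hF, neg_div] using this
  have hIic : ∫ x in Set.Iic (0:ℝ),
      (x ^ 2 * rexp (-b * x ^ 2) - rexp (-b * x ^ 2) / (2 * b)) = 0 := by
    have := integral_Iic_of_hasDerivAt_of_tendsto' (a := 0)
      (fun x _ => hderiv x) hint.integrableOn (m := 0) ?_
    · simpa [hF] using this
    · have := (tendsto_mul_exp_atBot hb).neg.div_const (2 * b)
      simpa [hF, neg_div] using this
  have htot : ∫ x : ℝ, (x ^ 2 * rexp (-b * x ^ 2) - rexp (-b * x ^ 2) / (2 * b)) = 0 := by
    rw [← intervalIntegral.integral_Iic_add_Ioi (b := (0:ℝ)) hint.integrableOn hint.integrableOn,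
      hIoi, hIic]
    norm_num
  rw [integral_sub (integrable_sq_mul_exp hb) ((integrable_exp_neg_mul_sq hb).div_const _)]
    at htot
  rw [integral_div, integral_gaussian] at htot
  linarith

variable {v : ℝ≥0}

private lemma pdf0_eq (v : ℝ≥0) : gaussianPDFReal 0 v
    = fun x => (Real.sqrt (2 * π * v))⁻¹ * rexp (-(2 * (v:ℝ))⁻¹ * x ^ 2) := by
  ext x
  by_cases hv : (v:ℝ) = 0
  · simp [gaussianPDFReal, hv]
  · unfold gaussianPDFReal
    congr 1
    rw [sub_zero]
    field_simp

private lemma twov_pos (hv : v ≠ 0) : 0 < (2 * (v:ℝ))⁻¹ := by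
  have : 0 < (v:ℝ) := lt_of_le_of_ne (NNReal.coe_nonneg v) (by exact_mod_cast (Ne.symm hv))
  positivity

private lemma integrable_pdf0_mul_id (hv : v ≠ 0) :
    Integrable (fun x : ℝ => gaussianPDFReal 0 v x * x) := by
  rw [pdf0_eq]
  have h := (integrable_mul_exp_neg_mul_sq (twov_pos hv)).const_mul (Real.sqrt (2 * π * v))⁻¹
  refine h.congr (ae_of_all _ fun x => by ring)

private lemma integrable_pdf0_mul_sq (hv : v ≠ 0) :
    Integrable (fun x : ℝ => gaussianPDFReal 0 v x * x ^ 2) := by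
  rw [pdf0_eq]
  have h := (integrable_sq_mul_exp (twov_pos hv)).const_mul (Real.sqrt (2 * π * v))⁻¹
  refine h.congr (ae_of_all _ fun x => by ring)

private lemma int_pdf0_mul_id (hv : v ≠ 0) :
    ∫ x : ℝ, gaussianPDFReal 0 v x * x = 0 := by
  rw [pdf0_eq]
  have : ∫ x : ℝ, (Real.sqrt (2 * π * v))⁻¹ * (x * rexp (-(2 * (v:ℝ))⁻¹ * x ^ 2))
      = (Real.sqrt (2 * π * v))⁻¹ * ∫ x : ℝ, x * rexp (-(2 * (v:ℝ))⁻¹ * x ^ 2) :=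
    integral_const_mul _ _
  rw [intGauss_odd (twov_pos hv), mul_zero] at this
  rw [← this]
  congr 1; ext x; ring

private lemma int_pdf0_mul_sq (hv : v ≠ 0) :
    ∫ x : ℝ, gaussianPDFReal 0 v x * x ^ 2 = (v : ℝ) := by
  rw [pdf0_eq]
  have h0 : 0 < (v:ℝ) := lt_of_le_of_ne (NNReal.coe_nonneg v) (by exact_mod_cast (Ne.symm hv))
  have hfun : (fun x : ℝ => ((Real.sqrt (2 * π * v))⁻¹ * rexp (-(2 * (v:ℝ))⁻¹ * x ^ 2)) * x ^ 2)
      = fun x : ℝ => (Real.sqrt (2 * π * v))⁻¹ * (x ^ 2 * rexp (-(2 * (v:ℝ))⁻¹ * x ^ 2)) := by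
    ext x; ring
  have hrw : Real.sqrt (π / (2 * (v:ℝ))⁻¹) = Real.sqrt (2 * π * v) := by
    congr 1; field_simp
  have hne : Real.sqrt (2 * π * (v:ℝ)) ≠ 0 := ne_of_gt (Real.sqrt_pos.mpr (by positivity))
  rw [hfun, integral_const_mul, intGauss_sq (twov_pos hv), hrw]
  field_simp

private lemma integral_gaussianReal_eq (hv : v ≠ 0) (μ : ℝ) (g : ℝ → ℝ) :
    ∫ x, g x ∂(gaussianReal μ v) = ∫ x, gaussianPDFReal μ v x * g x := by
  rw [gaussianReal_of_var_ne_zero _ hv]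
  have hd : gaussianPDF μ v
      = fun x => ((Real.toNNReal (gaussianPDFReal μ v x) : ℝ≥0) : ℝ≥0∞) := rfl
  rw [hd, integral_withDensity_eq_integral_smul
    ((measurable_gaussianPDFReal μ v).real_toNNReal) g]
  refine integral_congr_ae (ae_of_all _ fun x => ?_)
  show (Real.toNNReal (gaussianPDFReal μ v x)) • g x = gaussianPDFReal μ v x * g x
  rw [NNReal.smul_def, smul_eq_mul, Real.coe_toNNReal _ (gaussianPDFReal_nonneg _ _ _)]

private lemma pdf_shift (μ : ℝ) (x : ℝ) :
    gaussianPDFReal μ v x = gaussianPDFReal 0 v (x - μ) := by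
  rw [gaussianPDFReal_sub, zero_add]

private lemma integral_id_gaussianReal' (hv : v ≠ 0) (μ : ℝ) :
    ∫ x, x ∂(gaussianReal μ v) = μ := by
  rw [integral_gaussianReal_eq hv]
  have hshift := integral_add_right_eq_self (μ := volume)
    (fun x => gaussianPDFReal μ v x * x) μ
  rw [← hshift]
  have h1 : (fun x => gaussianPDFReal μ v (x + μ) * (x + μ))
      = fun x => gaussianPDFReal 0 v x * x + gaussianPDFReal 0 v x * μ := by
    ext x
    rw [gaussianPDFReal_add x μ, sub_self]
    ring
  rw [h1, integral_add (integrable_pdf0_mul_id hv)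
    ((integrable_gaussianPDFReal 0 v).mul_const μ),
    int_pdf0_mul_id hv, integral_mul_const, integral_gaussianPDFReal_eq_one 0 hv]
  ring

private lemma integral_sq_gaussianReal' (hv : v ≠ 0) (μ : ℝ) :
    ∫ x, x ^ 2 ∂(gaussianReal μ v) = (v : ℝ) + μ ^ 2 := by
  rw [integral_gaussianReal_eq hv]
  have hshift := integral_add_right_eq_self (μ := volume)
    (fun x => gaussianPDFReal μ v x * x ^ 2) μ
  rw [← hshift]
  have h1 : (fun x => gaussianPDFReal μ v (x + μ) * (x + μ) ^ 2)
      = fun x => gaussianPDFReal 0 v x * x ^ 2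
          + (gaussianPDFReal 0 v x * x * (2 * μ) + gaussianPDFReal 0 v x * μ ^ 2) := by
    ext x
    rw [gaussianPDFReal_add x μ, sub_self]
    ring
  have hA : Integrable (fun x : ℝ => gaussianPDFReal 0 v x * x * (2 * μ)) :=
    ((integrable_pdf0_mul_id hv).mul_const (2 * μ)).congr (ae_of_all _ fun x => by ring)
  have hB : Integrable (fun x : ℝ => gaussianPDFReal 0 v x * μ ^ 2) :=
    (integrable_gaussianPDFReal 0 v).mul_const (μ ^ 2)
  have hAB : Integrable (fun x : ℝ => gaussianPDFReal 0 v x * x * (2 * μ)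
      + gaussianPDFReal 0 v x * μ ^ 2) := hA.add hB
  rw [h1, integral_add (integrable_pdf0_mul_sq hv) hAB, integral_add hA hB,
    int_pdf0_mul_sq hv]
  have h2 : (fun x => gaussianPDFReal 0 v x * x * (2 * μ))
      = fun x => (gaussianPDFReal 0 v x * x) * (2 * μ) := rfl
  rw [h2, integral_mul_const, int_pdf0_mul_id hv, integral_mul_const,
    integral_gaussianPDFReal_eq_one 0 hv]
  ring

private lemma integrable_pdf_mul_id (hv : v ≠ 0) (μ : ℝ) :
    Integrable (fun x : ℝ => gaussianPDFReal μ v x * x) := by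
  have h0 := (integrable_pdf0_mul_id hv).comp_sub_right (g := μ)
  have h1 : Integrable (fun x : ℝ => gaussianPDFReal μ v x * (x - μ)) := by
    refine h0.congr (ae_of_all _ fun x => ?_)
    simp only [← pdf_shift]
  have h2 := ((integrable_gaussianPDFReal μ v).mul_const μ)
  refine (h1.add h2).congr (ae_of_all _ fun x => by simp only [Pi.add_apply]; ring)

private lemma integrable_pdf_mul_sq (hv : v ≠ 0) (μ : ℝ) :
    Integrable (fun x : ℝ => gaussianPDFReal μ v x * x ^ 2) := by
  have h0 := (integrable_pdf0_mul_sq hv).comp_sub_right (g := μ)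
  have h1 : Integrable (fun x : ℝ => gaussianPDFReal μ v x * (x - μ) ^ 2) := by
    refine h0.congr (ae_of_all _ fun x => ?_)
    simp only [← pdf_shift]
  have h1' := (integrable_pdf0_mul_id hv).comp_sub_right (g := μ)
  have h2 : Integrable (fun x : ℝ => gaussianPDFReal μ v x * (x - μ) * (2 * μ)) := by
    refine (h1'.mul_const (2 * μ)).congr (ae_of_all _ fun x => ?_)
    simp only [← pdf_shift]
  have h3 := ((integrable_gaussianPDFReal μ v).mul_const (μ ^ 2))
  refine ((h1.add h2).add h3).congr (ae_of_all _ fun x => by simp only [Pi.add_apply]; ring)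

private lemma integrable_id_gaussianReal (hv : v ≠ 0) (μ : ℝ) :
    Integrable (fun x : ℝ => x) (gaussianReal μ v) := by
  rw [gaussianReal_of_var_ne_zero _ hv]
  rw [integrable_withDensity_iff (measurable_gaussianPDF μ v)
    (ae_of_all _ fun x => ENNReal.ofReal_lt_top)]
  refine (integrable_pdf_mul_id hv μ).congr (ae_of_all _ fun x => ?_)
  show gaussianPDFReal μ v x * x = x * (gaussianPDF μ v x).toReal
  simp only [gaussianPDF_def]
  rw [ENNReal.toReal_ofReal (gaussianPDFReal_nonneg _ _ _)]
  ring

private lemma integrable_sq_gaussianReal (hv : v ≠ 0) (μ : ℝ) :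
    Integrable (fun x : ℝ => x ^ 2) (gaussianReal μ v) := by
  rw [gaussianReal_of_var_ne_zero _ hv]
  rw [integrable_withDensity_iff (measurable_gaussianPDF μ v)
    (ae_of_all _ fun x => ENNReal.ofReal_lt_top)]
  refine (integrable_pdf_mul_sq hv μ).congr (ae_of_all _ fun x => ?_)
  show gaussianPDFReal μ v x * x ^ 2 = x ^ 2 * (gaussianPDF μ v x).toReal
  simp only [gaussianPDF_def]
  rw [ENNReal.toReal_ofReal (gaussianPDFReal_nonneg _ _ _)]
  ring

private lemma gauss_integrable {Ω : Type*} [MeasurableSpace Ω] {P : Measure Ω}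
    {X : Ω → ℝ} (hX : Measurable X) {m : ℝ} (hv : v ≠ 0)
    (hmap : Measure.map X P = gaussianReal m v) :
    Integrable X P ∧ Integrable (fun ω => X ω ^ 2) P
      ∧ ∫ ω, X ω ∂P = m ∧ ∫ ω, X ω ^ 2 ∂P = (v:ℝ) + m ^ 2 := by
  have h1 : Integrable (fun x : ℝ => x) (Measure.map X P) :=
    hmap ▸ integrable_id_gaussianReal hv m
  have h2 : Integrable (fun x : ℝ => x ^ 2) (Measure.map X P) :=
    hmap ▸ integrable_sq_gaussianReal hv m
  have hi1 := (integrable_map_measure aestronglyMeasurable_id hX.aemeasurable).mp h1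
  have hi2 := (integrable_map_measure
    ((measurable_id.pow_const 2).aestronglyMeasurable) hX.aemeasurable).mp h2
  refine ⟨hi1, hi2, ?_, ?_⟩
  · have h := integral_map (μ := P) (φ := X) (f := fun x : ℝ => x) hX.aemeasurable
      measurable_id.aestronglyMeasurable
    rw [← h, hmap, integral_id_gaussianReal' hv]
  · have h := integral_map (μ := P) (φ := X) (f := fun x : ℝ => x ^ 2) hX.aemeasurable
      (measurable_id.pow_const 2).aestronglyMeasurable
    rw [← h, hmap, integral_sq_gaussianReal' hv]

private lemma integral_add9 {Ω : Type*} [MeasurableSpace Ω] (P : Measure Ω)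
    (f1 f2 f3 f4 f5 f6 f7 f8 f9 : Ω → ℝ)
    (h1 : Integrable f1 P) (h2 : Integrable f2 P) (h3 : Integrable f3 P)
    (h4 : Integrable f4 P) (h5 : Integrable f5 P) (h6 : Integrable f6 P)
    (h7 : Integrable f7 P) (h8 : Integrable f8 P) (h9 : Integrable f9 P) :
    ∫ ω, (f1 ω + f2 ω + f3 ω + f4 ω + f5 ω + f6 ω + f7 ω + f8 ω + f9 ω) ∂P
      = (∫ ω, f1 ω ∂P) + (∫ ω, f2 ω ∂P) + (∫ ω, f3 ω ∂P) + (∫ ω, f4 ω ∂P)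
        + (∫ ω, f5 ω ∂P) + (∫ ω, f6 ω ∂P) + (∫ ω, f7 ω ∂P) + (∫ ω, f8 ω ∂P)
        + (∫ ω, f9 ω ∂P) := by
  have g2 : Integrable (fun ω => f1 ω + f2 ω) P := h1.add h2
  have g3 : Integrable (fun ω => f1 ω + f2 ω + f3 ω) P := g2.add h3
  have g4 : Integrable (fun ω => f1 ω + f2 ω + f3 ω + f4 ω) P := g3.add h4
  have g5 : Integrable (fun ω => f1 ω + f2 ω + f3 ω + f4 ω + f5 ω) P := g4.add h5
  have g6 : Integrable (fun ω => f1 ω + f2 ω + f3 ω + f4 ω + f5 ω + f6 ω) P := g5.add h6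
  have g7 : Integrable (fun ω => f1 ω + f2 ω + f3 ω + f4 ω + f5 ω + f6 ω + f7 ω) P := g6.add h7
  have g8 : Integrable (fun ω => f1 ω + f2 ω + f3 ω + f4 ω + f5 ω + f6 ω + f7 ω + f8 ω) P :=
    g7.add h8
  rw [integral_add g8 h9, integral_add g7 h8, integral_add g6 h7, integral_add g5 h6,
    integral_add g4 h5, integral_add g3 h4, integral_add g2 h3, integral_add h1 h2]

end GaussAux

/-- (Proposition 3, intercept-only case) In the Gaussian model with a global random
intercept and cluster-specific Gaussian spatial random effects and no covariates, for any
two indices `i ≠ j`,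
`Corr(y i, y j) = (τ² + ∑ₕ λₕ² (Hₕ)ᵢⱼ P(cᵢ = cⱼ = h))
  / (√(σ² + τ² + ∑ₕ λₕ² P(cᵢ = h)) · √(σ² + τ² + ∑ₕ λₕ² P(cⱼ = h)))`. -/
theorem correlation_global_intercept_local_spatial
    {Ω : Type*} [MeasurableSpace Ω] (P : Measure Ω) [IsProbabilityMeasure P]
    (n k : ℕ) (hn : 2 ≤ n) (hk : 1 ≤ k)
    -- random cluster labels
    (c : Fin n → Ω → Fin k) (hc : ∀ i, Measurable (c i))
    -- global random intercept β ~ N(μ, τ²)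
    (β : Ω → ℝ) (hβ : Measurable β)
    -- Gaussian errors
    (ε : Fin n → Ω → ℝ) (hε : ∀ i, Measurable (ε i))
    -- cluster-specific spatial random effects
    (θ : Fin n → Ω → ℝ) (hθ : ∀ i, Measurable (θ i))
    (μv τ : ℝ) (hτ : 0 < τ) (σ : ℝ) (hσ : 0 < σ)
    (lam : Fin k → ℝ) (hlam : ∀ h, 0 < lam h)
    (H : Fin k → Matrix (Fin n) (Fin n) ℝ) (hH : ∀ h, (H h).PosSemidef)
    (hHdiag : ∀ h i, H h i i = 1)
    (hβgauss : Measure.map β P = gaussianReal μv (Real.toNNReal (τ ^ 2)))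
    -- the ε's are i.i.d. N(0, σ²)
    (hεindep : iIndepFun ε P)
    (hεgauss : ∀ i, Measure.map (ε i) P = gaussianReal 0 (Real.toNNReal (σ ^ 2)))
    -- the θ's are square integrable with the prescribed conditional moments given the labels
    (hθL2 : ∀ i, MemLp (θ i) 2 P)
    (hθcond1 : ∀ i, P[θ i |
      MeasurableSpace.comap (fun ω (i' : Fin n) => c i' ω) inferInstance] =ᵐ[P] 0)
    (hθcond2 : ∀ i j, P[fun ω => θ i ω * θ j ω |
      MeasurableSpace.comap (fun ω (i' : Fin n) => c i' ω) inferInstance]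
      =ᵐ[P] fun ω => ∑ h, (lam h) ^ 2 * H h i j * (if c i ω = h ∧ c j ω = h then (1 : ℝ) else 0))
    -- β is independent of (labels, θ)
    (hβind : IndepFun β (fun ω => ((fun i => c i ω, fun i => θ i ω) :
      (Fin n → Fin k) × (Fin n → ℝ))) P)
    -- the ε family is independent of (labels, θ, β)
    (hεind : IndepFun (fun ω (i : Fin n) => ε i ω)
      (fun ω => ((fun i => c i ω, fun i => θ i ω, β ω) :
        (Fin n → Fin k) × (Fin n → ℝ) × ℝ)) P)
    -- responses
    (y : Fin n → Ω → ℝ)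
    (hy : ∀ i ω, y i ω = β ω + θ i ω + ε i ω)
    (i j : Fin n) (hij : i ≠ j) :
    corr P (y i) (y j)
      = (τ ^ 2 + ∑ h, (lam h) ^ 2 * H h i j * (P {ω | c i ω = h ∧ c j ω = h}).toReal)
        / (Real.sqrt (σ ^ 2 + τ ^ 2 + ∑ h, (lam h) ^ 2 * (P {ω | c i ω = h}).toReal)
            * Real.sqrt (σ ^ 2 + τ ^ 2 + ∑ h, (lam h) ^ 2 * (P {ω | c j ω = h}).toReal)) := by
  classical
  have hτ2 : (Real.toNNReal (τ ^ 2)) ≠ 0 := by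
    simp only [ne_eq, Real.toNNReal_eq_zero, not_le]
    positivity
  have hσ2 : (Real.toNNReal (σ ^ 2)) ≠ 0 := by
    simp only [ne_eq, Real.toNNReal_eq_zero, not_le]
    positivity
  have hτv : ((Real.toNNReal (τ ^ 2)) : ℝ) = τ ^ 2 := Real.coe_toNNReal _ (sq_nonneg τ)
  have hσv : ((Real.toNNReal (σ ^ 2)) : ℝ) = σ ^ 2 := Real.coe_toNNReal _ (sq_nonneg σ)
  obtain ⟨hβint, hβsq, hβmean, hβmom2⟩ := gauss_integrable hβ hτ2 hβgauss
  rw [hτv] at hβmom2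
  have hβL2 : MemLp β 2 P := (memLp_two_iff_integrable_sq hβ.aestronglyMeasurable).mpr hβsq
  have hεdata := fun l => gauss_integrable (hε l) hσ2 (hεgauss l)
  have hεint : ∀ l, Integrable (ε l) P := fun l => (hεdata l).1
  have hεmean : ∀ l, ∫ ω, ε l ω ∂P = 0 := fun l => (hεdata l).2.2.1
  have hεL2 : ∀ l, MemLp (ε l) 2 P := fun l =>
    (memLp_two_iff_integrable_sq (hε l).aestronglyMeasurable).mpr (hεdata l).2.1
  have hεsq : ∀ l, ∫ ω, ε l ω * ε l ω ∂P = σ ^ 2 := by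
    intro l
    have h := (hεdata l).2.2.2
    rw [hσv] at h
    calc ∫ ω, ε l ω * ε l ω ∂P = ∫ ω, ε l ω ^ 2 ∂P :=
          integral_congr_ae (ae_of_all _ fun ω => by simp only []; ring)
      _ = σ ^ 2 := by rw [h]; ring
  have hmcle : MeasurableSpace.comap (fun ω (i' : Fin n) => c i' ω) inferInstance
      ≤ (inferInstance : MeasurableSpace Ω) :=
    Measurable.comap_le (measurable_pi_lambda _ fun i' => hc i')
  have hθint : ∀ l, Integrable (θ l) P := fun l => (hθL2 l).integrable one_le_two
  have hθmean : ∀ l, ∫ ω, θ l ω ∂P = 0 := by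
    intro l
    rw [← integral_condExp hmcle (f := θ l), integral_congr_ae (hθcond1 l)]
    simp
  have hmul : ∀ {f g : Ω → ℝ}, MemLp f 2 P → MemLp g 2 P →
      Integrable (fun ω => f ω * g ω) P := by
    intro f g hf hg
    have h : MemLp (g • f) 1 P := hf.smul hg
    exact (memLp_one_iff_integrable.mp h).congr
      (ae_of_all _ fun ω => by simp [Pi.smul_apply, smul_eq_mul, mul_comm])
  have hsetm : ∀ (l m : Fin n) (h : Fin k),
      MeasurableSet {ω | c l ω = h ∧ c m ω = h} := by
    intro l m h
    have hs : {ω | c l ω = h ∧ c m ω = h} = (c l ⁻¹' {h}) ∩ (c m ⁻¹' {h}) := by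
      ext ω; simp
    rw [hs]
    exact (hc l (measurableSet_singleton h)).inter (hc m (measurableSet_singleton h))
  have hiteq : ∀ (l m : Fin n) (h : Fin k),
      (fun ω => if c l ω = h ∧ c m ω = h then (1:ℝ) else 0)
        = Set.indicator {ω | c l ω = h ∧ c m ω = h} (fun _ => (1:ℝ)) := by
    intro l m h
    ext ω
    by_cases hw : c l ω = h ∧ c m ω = h <;>
      simp [Set.indicator_apply, Set.mem_setOf_eq, hw]
  have hθθ : ∀ l m, ∫ ω, θ l ω * θ m ω ∂P
      = ∑ h, lam h ^ 2 * H h l m * (P {ω | c l ω = h ∧ c m ω = h}).toReal := by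
    intro l m
    rw [← integral_condExp hmcle (f := fun ω => θ l ω * θ m ω),
      integral_congr_ae (hθcond2 l m), integral_finset_sum]
    · refine Finset.sum_congr rfl fun h _ => ?_
      rw [integral_const_mul]
      congr 1
      rw [hiteq l m h, integral_indicator_const (1:ℝ) (hsetm l m h), smul_eq_mul, mul_one]
      rw [measureReal_def]
    · intro h _
      refine (((integrable_const (1:ℝ)).indicator (hsetm l m h)).const_mul
        (lam h ^ 2 * H h l m)).congr (ae_of_all _ fun ω => ?_)
      by_cases hw : c l ω = h ∧ c m ω = h <;>
        simp [Set.indicator_apply, Set.mem_setOf_eq, hw]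
  have hβθind : ∀ l, IndepFun β (θ l) P := fun l =>
    hβind.comp measurable_id ((measurable_pi_apply l).comp measurable_snd)
  have hεβind : ∀ l, IndepFun (ε l) β P := fun l =>
    hεind.comp (measurable_pi_apply l) (measurable_snd.comp measurable_snd)
  have hεθind : ∀ l m, IndepFun (ε l) (θ m) P := fun l m =>
    hεind.comp (measurable_pi_apply l)
      ((measurable_pi_apply m).comp (measurable_fst.comp measurable_snd))
  have hβθ0 : ∀ l, ∫ ω, β ω * θ l ω ∂P = 0 := by
    intro l
    have h := (hβθind l).integral_mul_eq_mul_integral hβ.aestronglyMeasurable (hθ l).aestronglyMeasurable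
    calc ∫ ω, β ω * θ l ω ∂P = (∫ ω, β ω ∂P) * ∫ ω, θ l ω ∂P := h
      _ = 0 := by rw [hθmean l, mul_zero]
  have hθβ0 : ∀ l, ∫ ω, θ l ω * β ω ∂P = 0 := by
    intro l
    rw [← hβθ0 l]
    exact integral_congr_ae (ae_of_all _ fun ω => by simp only []; ring)
  have hεβ0 : ∀ l, ∫ ω, ε l ω * β ω ∂P = 0 := by
    intro l
    have h := (hεβind l).integral_mul_eq_mul_integral (hε l).aestronglyMeasurable hβ.aestronglyMeasurable
    calc ∫ ω, ε l ω * β ω ∂P = (∫ ω, ε l ω ∂P) * ∫ ω, β ω ∂P := h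
      _ = 0 := by rw [hεmean l, zero_mul]
  have hβε0 : ∀ l, ∫ ω, β ω * ε l ω ∂P = 0 := by
    intro l
    rw [← hεβ0 l]
    exact integral_congr_ae (ae_of_all _ fun ω => by simp only []; ring)
  have hεθ0 : ∀ l m, ∫ ω, ε l ω * θ m ω ∂P = 0 := by
    intro l m
    have h := (hεθind l m).integral_mul_eq_mul_integral (hε l).aestronglyMeasurable (hθ m).aestronglyMeasurable
    calc ∫ ω, ε l ω * θ m ω ∂P = (∫ ω, ε l ω ∂P) * ∫ ω, θ m ω ∂P := h
      _ = 0 := by rw [hεmean l, zero_mul]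
  have hθε0 : ∀ l m, ∫ ω, θ l ω * ε m ω ∂P = 0 := by
    intro l m
    rw [← hεθ0 m l]
    exact integral_congr_ae (ae_of_all _ fun ω => by simp only []; ring)
  have hββ : ∫ ω, β ω * β ω ∂P = τ ^ 2 + μv ^ 2 := by
    calc ∫ ω, β ω * β ω ∂P = ∫ ω, β ω ^ 2 ∂P :=
        integral_congr_ae (ae_of_all _ fun ω => by simp only []; ring)
      _ = τ ^ 2 + μv ^ 2 := by rw [hβmom2]
  have hymean : ∀ l, ∫ ω, y l ω ∂P = μv := by
    intro l
    have hbt : Integrable (fun ω => β ω + θ l ω) P := hβint.add (hθint l)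
    calc ∫ ω, y l ω ∂P = ∫ ω, (β ω + θ l ω + ε l ω) ∂P :=
        integral_congr_ae (ae_of_all _ fun ω => hy l ω)
      _ = μv := by
        rw [integral_add hbt (hεint l), integral_add hβint (hθint l),
          hβmean, hθmean l, hεmean l]
        ring
  have hEyy : ∀ l m, ∫ ω, y l ω * y m ω ∂P
      = (τ ^ 2 + μv ^ 2)
        + (∑ h, lam h ^ 2 * H h l m * (P {ω | c l ω = h ∧ c m ω = h}).toReal)
        + ∫ ω, ε l ω * ε m ω ∂P := by
    intro l m
    calc ∫ ω, y l ω * y m ω ∂P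
        = ∫ ω, (β ω * β ω + β ω * θ m ω + β ω * ε m ω + θ l ω * β ω + θ l ω * θ m ω
            + θ l ω * ε m ω + ε l ω * β ω + ε l ω * θ m ω + ε l ω * ε m ω) ∂P :=
          integral_congr_ae (ae_of_all _ fun ω => by simp only []; rw [hy, hy]; ring)
      _ = _ := by
          rw [integral_add9 P _ _ _ _ _ _ _ _ _
            (hmul hβL2 hβL2) (hmul hβL2 (hθL2 m)) (hmul hβL2 (hεL2 m))
            (hmul (hθL2 l) hβL2) (hmul (hθL2 l) (hθL2 m)) (hmul (hθL2 l) (hεL2 m))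
            (hmul (hεL2 l) hβL2) (hmul (hεL2 l) (hθL2 m)) (hmul (hεL2 l) (hεL2 m)),
            hββ, hβθ0 m, hβε0 m, hθβ0 l, hθθ l m, hθε0 l m, hεβ0 l, hεθ0 l m]
          ring
  have hεεij : ∫ ω, ε i ω * ε j ω ∂P = 0 := by
    have hind : IndepFun (ε i) (ε j) P := hεindep.indepFun hij
    have h := hind.integral_mul_eq_mul_integral (hε i).aestronglyMeasurable (hε j).aestronglyMeasurable
    calc ∫ ω, ε i ω * ε j ω ∂P = (∫ ω, ε i ω ∂P) * ∫ ω, ε j ω ∂P := h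
      _ = 0 := by rw [hεmean i, zero_mul]
  have hcov : cov P (y i) (y j)
      = τ ^ 2 + ∑ h, lam h ^ 2 * H h i j * (P {ω | c i ω = h ∧ c j ω = h}).toReal := by
    simp only [cov]
    rw [hEyy i j, hymean i, hymean j, hεεij]
    ring
  have hvar : ∀ l, var P (y l)
      = σ ^ 2 + τ ^ 2 + ∑ h, lam h ^ 2 * (P {ω | c l ω = h}).toReal := by
    intro l
    have hS : ∑ h, lam h ^ 2 * H h l l * (P {ω | c l ω = h ∧ c l ω = h}).toReal
        = ∑ h, lam h ^ 2 * (P {ω | c l ω = h}).toReal := by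
      refine Finset.sum_congr rfl fun h _ => ?_
      rw [hHdiag h l, mul_one]
      have hs : {ω | c l ω = h ∧ c l ω = h} = {ω | c l ω = h} := by ext ω; simp
      rw [hs]
    simp only [var, cov]
    rw [hEyy l l, hymean l, hεsq l, hS]
    ring
  simp only [corr]
  rw [hcov, hvar i, hvar j]
end
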